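/- Let X be a random variable with support (0,l), cumulative distribution function F, and finite CE_α(X; t). Then for every 0 < α ≤ 1 and every t ∈ (0,l), CE_α(X; t) ≤ (t/Γ(α+1)) (α/e)^α. -/

import Mathlib

open MeasureTheory Set
open scoped ProbabilityTheory

lemma aux_pointwise (α : ℝ) (hα : 0 < α) (u : ℝ) (hu0 : 0 ≤ u) (hu1 : u ≤ 1) :
    u * (-Real.log u) ^ α ≤ (α / Real.exp 1) ^ α := by
  have hRHS : (0:ℝ) ≤ (α / Real.exp 1) ^ α :=
    Real.rpow_nonneg (div_nonneg hα.le (Real.exp_pos 1).le) α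
  rcases eq_or_lt_of_le hu0 with h0 | h0
  · simp [← h0, hRHS]
  set v := -Real.log u with hv
  have hv0 : 0 ≤ v := by
    have := Real.log_nonpos hu0 hu1
    simp [hv]; linarith
  rcases eq_or_lt_of_le hv0 with hveq | hvpos
  · rw [← hveq, Real.zero_rpow hα.ne', mul_zero]; exact hRHS
  · have hu : u = Real.exp (-v) := by
      rw [hv, neg_neg, Real.exp_log h0]
    have key : α * Real.log (v / α) ≤ v / α * α - α := by
      have := Real.log_le_sub_one_of_pos (div_pos hvpos hα)
      nlinarith
    have hlog : Real.log (v / α) = Real.log v - Real.log α :=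
      Real.log_div hvpos.ne' hα.ne'
    have hvα : v / α * α = v := div_mul_cancel₀ v hα.ne'
    have key2 : -v + α * Real.log v ≤ α * (Real.log α - 1) := by
      rw [hlog] at key; rw [hvα] at key; ring_nf; ring_nf at key; linarith
    calc u * v ^ α = Real.exp (-v + α * Real.log v) := by
          rw [hu, Real.rpow_def_of_pos hvpos, Real.exp_add]; ring_nf
      _ ≤ Real.exp (α * (Real.log α - 1)) := Real.exp_le_exp.mpr key2
      _ = (α / Real.exp 1) ^ α := by
          rw [Real.rpow_def_of_pos (div_pos hα (Real.exp_pos 1)),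
            Real.log_div hα.ne' (Real.exp_pos 1).ne', Real.log_exp]; ring_nf

/-- for a random variable `X` with support `(0,l)`, CDF `F`, and finite
dynamic fractional generalized cumulative entropy `CE_α(X;t)`, for every `0 < α ≤ 1`
and every `t ∈ (0,l)`: `CE_α(X;t) ≤ (t/Γ(α+1)) (α/e)^α`. -/
theorem dfgce_upper_bound
    {Ω : Type*} [MeasureSpace Ω] [IsProbabilityMeasure (ℙ : Measure Ω)]
    (X : Ω → ℝ) (hX : Measurable X)
    (l : ℝ) (hl : 0 < l)
    (hsupp : ∀ᵐ ω ∂ℙ, X ω ∈ Set.Ioo 0 l)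
    (F : ℝ → ℝ) (hF : ∀ x, F x = (ℙ {ω | X ω ≤ x}).toReal)
    (α : ℝ) (hα : 0 < α) (hα1 : α ≤ 1)
    (t : ℝ) (ht : t ∈ Set.Ioo (0:ℝ) l)
    (hfin : IntegrableOn
      (fun x => (F x / F t) * (-Real.log (F x / F t)) ^ α) (Set.Ioo (0:ℝ) t)) :
    (1 / Real.Gamma (α + 1)) *
        ∫ x in Set.Ioo (0:ℝ) t, (F x / F t) * (-Real.log (F x / F t)) ^ α
      ≤ t / Real.Gamma (α + 1) * (α / Real.exp 1) ^ α := by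
  set C : ℝ := (α / Real.exp 1) ^ α with hC
  have hC0 : 0 ≤ C := Real.rpow_nonneg (div_nonneg hα.le (Real.exp_pos 1).le) α
  have hFnn : ∀ x, 0 ≤ F x := fun x => by rw [hF x]; exact ENNReal.toReal_nonneg
  have hmono : ∀ x, x ≤ t → F x ≤ F t := by
    intro x hx
    rw [hF x, hF t]
    refine ENNReal.toReal_mono (measure_ne_top _ _) (measure_mono ?_)
    intro ω hω; exact le_trans hω hx
  have hpt : ∀ x ∈ Set.Ioo (0:ℝ) t,
      (F x / F t) * (-Real.log (F x / F t)) ^ α ≤ C := by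
    intro x hx
    have hu0 : 0 ≤ F x / F t := div_nonneg (hFnn x) (hFnn t)
    have hu1 : F x / F t ≤ 1 := by
      rcases eq_or_lt_of_le (hFnn t) with h | h
      · rw [← h, div_zero]; norm_num
      · exact (div_le_one h).mpr (hmono x hx.2.le)
    exact aux_pointwise α hα _ hu0 hu1
  have hint : ∫ x in Set.Ioo (0:ℝ) t, (F x / F t) * (-Real.log (F x / F t)) ^ α
      ≤ t * C := by
    have := setIntegral_mono_on hfin ((integrableOn_const_iff).mpr
      (Or.inr (by simp [Real.volume_Ioo]))) measurableSet_Ioo hpt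
    rw [setIntegral_const] at this
    rwa [Real.volume_real_Ioo, max_eq_left (by linarith [ht.1]), smul_eq_mul,
      sub_zero] at this
  have hΓ : 0 < Real.Gamma (α + 1) := Real.Gamma_pos_of_pos (by linarith)
  have h1 : (0:ℝ) ≤ 1 / Real.Gamma (α + 1) := by positivity
  calc (1 / Real.Gamma (α + 1)) *
        ∫ x in Set.Ioo (0:ℝ) t, (F x / F t) * (-Real.log (F x / F t)) ^ α
      ≤ (1 / Real.Gamma (α + 1)) * (t * C) := mul_le_mul_of_nonneg_left hint h1
    _ = t / Real.Gamma (α + 1) * C := by ring
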